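/- Let F_q be a finite field of characteristic 2 and n ≥ 1 an integer with gcd(n+1, q) = 1. If q > n/2, then there exists a ∈ F_q such that the matrix I_n + T_n(a)² is invertible (i.e., the code C_n(a) with generator matrix (I_n | T_n(a)) is LCD). -/
import Mathlib

open Polynomial


/-- The `n × n` tridiagonal Toeplitz matrix with diagonal entries `a` and
sub/super-diagonal entries `b`. -/
def triToeplitz (F : Type*) [Field F] (n : ℕ) (a b : F) :
    Matrix (Fin n) (Fin n) F :=
  Matrix.of fun i j =>
    if (i : ℕ) = (j : ℕ) then a
    else if (i : ℕ) + 1 = (j : ℕ) ∨ (j : ℕ) + 1 = (i : ℕ) then b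
    else 0

noncomputable def chebP (F : Type*) [Field F] : ℕ → Polynomial F
  | 0 => 1
  | 1 => Polynomial.X
  | (n+2) => Polynomial.X * chebP F (n+1) + chebP F n

lemma chebP_map {F K : Type*} [Field F] [Field K] (f : F →+* K) :
    ∀ m, (chebP F m).map f = chebP K m
  | 0 => by simp [chebP]
  | 1 => by simp [chebP]
  | (m+2) => by
    simp only [chebP, Polynomial.map_add, Polynomial.map_mul, Polynomial.map_X,
      chebP_map f (m+1), chebP_map f m]

lemma chebP_eval_zero_step (F : Type*) [Field F] (k : ℕ) :
    (chebP F (k+2)).eval 0 = (chebP F k).eval 0 := by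
  simp [chebP]

lemma chebP_eval_zero (F : Type*) [Field F] : ∀ m, (chebP F (2*m)).eval 0 = 1
  | 0 => by simp [chebP]
  | (m+1) => by
    have h : 2*(m+1) = 2*m+2 := by ring
    rw [h, chebP_eval_zero_step, chebP_eval_zero F m]

lemma chebP_key {K : Type*} [Field K] [CharP K 2] (t a : K)
    (hat : a * t = t * t + 1) :
    ∀ m : ℕ, (t*t+1) * t^m * (chebP K m).eval a = t^(2*m+2) + 1 := by
  have h2 : (2:K) = 0 := CharTwo.two_eq_zero
  intro m
  induction m using Nat.twoStepInduction with
  | zero => simp [chebP]; ring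
  | one =>
    simp only [chebP, eval_X, pow_one]
    linear_combination (t*t+1) * hat + (t^2) * h2
  | more m IH0 IH1 =>
    simp only [chebP, eval_add, eval_mul, eval_X]
    linear_combination ((t*t+1)*t^(m+1)*((chebP K (m+1)).eval a)) * hat
      + (t*t+1) * IH1 + (t^2) * IH0 + (t^(2*m+4)+t^2) * h2

lemma tri_mulVec {F : Type*} [Field F] {n : ℕ} (a : F) (v : Fin n → F) (i : Fin n) :
    (triToeplitz F n a 1).mulVec v i
      = a * v i + (if h : (i:ℕ)+1 < n then v ⟨(i:ℕ)+1, h⟩ else 0)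
        + (if h : 0 < (i:ℕ) then v ⟨(i:ℕ)-1, lt_of_le_of_lt (Nat.sub_le _ _) i.isLt⟩ else 0) := by
  have hrw : ∀ j : Fin n, triToeplitz F n a 1 i j * v j
      = (if (i:ℕ) = (j:ℕ) then a * v j else 0)
        + (if (i:ℕ)+1 = (j:ℕ) then v j else 0)
        + (if (j:ℕ)+1 = (i:ℕ) then v j else 0) := by
    intro j
    simp only [triToeplitz, Matrix.of_apply]
    split_ifs <;> first | (exfalso; omega) | ring
  simp only [Matrix.mulVec, dotProduct]
  rw [Finset.sum_congr rfl (fun j _ => hrw j), Finset.sum_add_distrib,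
    Finset.sum_add_distrib]
  congr 1
  · congr 1
    · have h1 : ∀ j : Fin n, ((i:ℕ) = (j:ℕ)) = (i = j) :=
        fun j => propext (by rw [Fin.ext_iff])
      simp only [h1]
      simp
    · by_cases h : (i:ℕ)+1 < n
      · have h1 : ∀ j : Fin n, ((i:ℕ)+1 = (j:ℕ)) = ((⟨(i:ℕ)+1, h⟩ : Fin n) = j) :=
          fun j => propext (by simp only [Fin.ext_iff, Fin.val_mk]; try omega)
        simp only [h1]
        rw [dif_pos h]
        simp
      · rw [dif_neg h]
        exact Finset.sum_eq_zero fun j _ => if_neg (by have := j.isLt; omega)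
  · by_cases h : 0 < (i:ℕ)
    · have h1 : ∀ j : Fin n, ((j:ℕ)+1 = (i:ℕ))
          = (j = (⟨(i:ℕ)-1, lt_of_le_of_lt (Nat.sub_le _ _) i.isLt⟩ : Fin n)) :=
        fun j => propext (by simp only [Fin.ext_iff, Fin.val_mk]; try omega)
      simp only [h1]
      rw [dif_pos h]
      simp
    · rw [dif_neg h]
      exact Finset.sum_eq_zero fun j _ => if_neg (by omega)

lemma tri_ker {F : Type*} [Field F] [CharP F 2] {n : ℕ} (hn : 0 < n) (a : F) (v : Fin n → F)
    (hv : (triToeplitz F n a 1).mulVec v = 0) :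
    ∀ k, ∀ h : k < n, v ⟨k, h⟩ = (chebP F k).eval a * v ⟨0, hn⟩ := by
  have h2 : (2:F) = 0 := CharTwo.two_eq_zero
  intro k
  induction k using Nat.twoStepInduction with
  | zero => intro h; simp [chebP]
  | one =>
    intro h
    have h0 := congrFun hv ⟨0, hn⟩
    rw [tri_mulVec] at h0
    rw [dif_pos (show ((⟨0, hn⟩ : Fin n) : ℕ)+1 < n from h),
      dif_neg (show ¬(0 < ((⟨0, hn⟩ : Fin n) : ℕ)) from by simp only [Fin.val_mk]; omega)] at h0
    simp only [Pi.zero_apply] at h0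
    simp only [chebP, eval_X]
    linear_combination h0 + (- (a * v ⟨0, hn⟩)) * h2
  | more k IH0 IH1 =>
    intro h
    have hk1 : k+1 < n := by omega
    have hk0 : k < n := by omega
    have hrow := congrFun hv ⟨k+1, hk1⟩
    rw [tri_mulVec] at hrow
    rw [dif_pos (show ((⟨k+1, hk1⟩ : Fin n) : ℕ)+1 < n from h),
      dif_pos (show 0 < ((⟨k+1, hk1⟩ : Fin n) : ℕ) from Nat.succ_pos k)] at hrow
    simp only [Pi.zero_apply, Nat.add_sub_cancel] at hrow
    simp only [chebP, eval_add, eval_mul, eval_X]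
    rw [IH1 hk1, IH0 hk0] at hrow
    linear_combination hrow
      - ((a * ((chebP F (k+1)).eval a) + (chebP F k).eval a) * v ⟨0, hn⟩) * h2

lemma tri_isUnit {F : Type*} [Field F] [CharP F 2] {n : ℕ} (hn : 0 < n) (a : F)
    (ha : (chebP F n).eval a ≠ 0) : IsUnit (triToeplitz F n a 1) := by
  have h2 : (2:F) = 0 := CharTwo.two_eq_zero
  rw [← Matrix.mulVec_injective_iff_isUnit]
  have hker : ∀ v : Fin n → F, (triToeplitz F n a 1).mulVec v = 0 → v = 0 := by
    intro v hv
    have hall := tri_ker hn a v hv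
    have hn1 : n - 1 < n := by omega
    have hrow := congrFun hv ⟨n-1, hn1⟩
    rw [tri_mulVec] at hrow
    rw [dif_neg (show ¬(((⟨n-1, hn1⟩ : Fin n) : ℕ)+1 < n) from by
      simp only [Fin.val_mk]; omega)] at hrow
    simp only [Pi.zero_apply] at hrow
    have h0 : v ⟨0, hn⟩ = 0 := by
      rcases Nat.lt_or_ge n 2 with hn2 | hn2
      · -- n = 1
        have hne : n = 1 := by omega
        subst hne
        rw [dif_neg (show ¬(0 < ((⟨1-1, hn1⟩ : Fin 1) : ℕ)) from by simp)] at hrow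
        have e : (1:ℕ)-1 = 0 := rfl
        simp only [e] at hrow
        have ha1 : (chebP F 1).eval a = a := by simp [chebP]
        rw [ha1] at ha
        have : a * v ⟨0, hn⟩ = 0 := by linear_combination hrow
        exact (mul_eq_zero.mp this).resolve_left ha
      · obtain ⟨m, rfl⟩ : ∃ m, n = m + 2 := ⟨n - 2, by omega⟩
        rw [dif_pos (show 0 < ((⟨m+2-1, hn1⟩ : Fin (m+2)) : ℕ) from by
          simp only [Fin.val_mk]; omega)] at hrow
        have e1 := hall (m+1) (by omega)
        have e0 := hall m (by omega)
        have ea1 : m + 2 - 1 = m + 1 := by omega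
        have ea2 : m + 1 - 1 = m := by omega
        simp only [ea1, ea2] at hrow
        rw [e1, e0] at hrow
        have key : (chebP F (m+2)).eval a * v ⟨0, hn⟩ = 0 := by
          simp only [chebP, eval_add, eval_mul, eval_X]
          linear_combination hrow
        exact (mul_eq_zero.mp key).resolve_left ha
    funext i
    rcases i with ⟨k, hk⟩
    rw [hall k hk, h0, mul_zero, Pi.zero_apply]
  intro x y hxy
  have hsub : (triToeplitz F n a 1).mulVec (x - y) = 0 := by
    rw [Matrix.mulVec_sub, hxy, sub_self]
  exact sub_eq_zero.mp (hker _ hsub)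

/-- Characteristic 2, `gcd(n+1,q)=1`, `q > n/2`: there exists `a` such that the
double Toeplitz code `C_n(a)` is LCD, i.e. `1 + T_n(a)^2` is invertible. -/
theorem stmt_8 (F : Type*) [Field F] [Fintype F] [CharP F 2]
    (n : ℕ) (hn : 1 ≤ n) (hcop : Nat.gcd (n + 1) (Fintype.card F) = 1)
    (hq : n / 2 < Fintype.card F) :
    ∃ a : F,
      IsUnit ((1 : Matrix (Fin n) (Fin n) F) + (triToeplitz F n a 1) ^ 2) := by
  classical
  have h2F : (2:F) = 0 := CharTwo.two_eq_zero
  set K := AlgebraicClosure F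
  have h2K : (2:K) = 0 := CharTwo.two_eq_zero
  -- n is even
  obtain ⟨k, hk2, hkcard⟩ := FiniteField.card F 2
  have hdvd : 2 ∣ Fintype.card F := by
    rw [hkcard]; exact dvd_pow_self 2 (by exact_mod_cast k.ne_zero)
  have hneven : ∃ m, n = 2 * m := by
    rcases Nat.even_or_odd n with he | ho
    · rcases he with ⟨m, rfl⟩; exact ⟨m, by ring⟩
    · exfalso
      have h2n1 : 2 ∣ (n+1) := by rcases ho with ⟨m, rfl⟩; exact ⟨m+1, by ring⟩
      have := Nat.dvd_gcd h2n1 hdvd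
      rw [hcop] at this
      omega
  obtain ⟨m, hm⟩ := hneven
  -- the root set
  set S : Finset F := Finset.filter (fun a : F => (chebP F n).eval a = 0) Finset.univ with hS
  -- choose quadratic roots in K
  have hex : ∀ a : F, ∃ t : K, t * t + (algebraMap F K a) * t + 1 = 0 := by
    intro a
    obtain ⟨t, ht⟩ := IsAlgClosed.exists_root
      ((X:K[X])^2 + C (algebraMap F K a) * X + C 1) (by
        have : ((X:K[X])^2 + C (algebraMap F K a) * X + C 1).degree = 2 := by
          compute_degree!
        rw [this]; exact two_ne_zero)
    refine ⟨t, ?_⟩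
    have := ht
    simp only [IsRoot, eval_add, eval_pow, eval_mul, eval_C, eval_X] at this
    linear_combination this
  choose t ht using hex
  have hT0 : ∀ a : F, t a ≠ 0 := by
    intro a h
    have := ht a
    rw [h] at this
    simp at this
  -- properties of roots
  have hroots : ∀ a ∈ S, (t a)^(n+1) = 1 ∧ t a ≠ 1 := by
    intro a haS
    have haev : (chebP F n).eval a = 0 := by
      rw [hS] at haS; simpa using haS
    have hat : (algebraMap F K a) * t a = t a * t a + 1 := by
      linear_combination (ht a) + (-(t a * t a)-1) * h2K
    have evalK : (chebP K n).eval (algebraMap F K a) = 0 := by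
      rw [← chebP_map (algebraMap F K), eval_map, Polynomial.eval₂_at_apply, haev, map_zero]
    have key := chebP_key (t a) (algebraMap F K a) hat n
    rw [evalK, mul_zero] at key
    have hpow2 : (t a)^(2*n+2) = 1 := by linear_combination -key - h2K
    have hsq : ((t a)^(n+1) + 1)^2 = 0 := by
      linear_combination hpow2 + ((t a)^(n+1) + 1) * h2K
    have hz : (t a)^(n+1) + 1 = 0 := by
      have := pow_eq_zero_iff (n := 2) (by norm_num) |>.mp hsq
      exact this
    constructor
    · linear_combination hz - h2K
    · intro h1
      have hb : algebraMap F K a = 0 := by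
        rw [h1] at hat
        linear_combination hat + h2K
      have ha0 : a = 0 := by
        have := (algebraMap F K).injective
        apply this
        rw [hb, map_zero]
      rw [ha0, hm, chebP_eval_zero] at haev
      exact one_ne_zero haev
  -- recover a from t a
  have hrec : ∀ a a' : F, t a = t a' → a = a' := by
    intro a a' hEq
    have h1 := ht a
    have h2 := ht a'
    rw [← hEq] at h2
    have hsub : (algebraMap F K a - algebraMap F K a') * t a = 0 := by
      linear_combination h1 - h2
    rcases mul_eq_zero.mp hsub with h | h
    · exact (algebraMap F K).injective (by linear_combination h)
    · exact absurd h (hT0 a)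
  have hrec' : ∀ a a' : F, t a = (t a')⁻¹ → a = a' := by
    intro a a' hEq
    have hprod : t a * t a' = 1 := by
      rw [hEq, inv_mul_cancel₀ (hT0 a')]
    have hsub : (algebraMap F K a - algebraMap F K a') * t a = 0 := by
      linear_combination (ht a) - (t a * t a) * (ht a')
        + (t a * t a' + 1 + (algebraMap F K a') * t a) * hprod
    rcases mul_eq_zero.mp hsub with h | h
    · exact (algebraMap F K).injective (by linear_combination h)
    · exact absurd h (hT0 a)
  have hsq1 : ∀ a : F, t a * t a = 1 → t a = 1 := by
    intro a hEq
    have hsq : (t a + 1)^2 = 0 := by linear_combination hEq + (t a + 1) * h2K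
    have hz : t a + 1 = 0 := pow_eq_zero_iff (n := 2) (by norm_num) |>.mp hsq
    linear_combination hz - h2K
  -- target finset
  set p1 : K[X] := (X:K[X])^(n+1) - C 1 with hp1def
  have hp1 : p1 ≠ 0 := X_pow_sub_C_ne_zero (by omega) 1
  set R : Finset K := p1.roots.toFinset.erase 1 with hR
  have hmemR : ∀ z : K, z ≠ 1 → z^(n+1) = 1 → z ∈ R := by
    intro z hz1 hzpow
    rw [hR]
    refine Finset.mem_erase.mpr ⟨hz1, Multiset.mem_toFinset.mpr ?_⟩
    rw [mem_roots hp1]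
    simp [hp1def, IsRoot, hzpow]
  have hcardR : R.card ≤ n := by
    have h1mem : (1:K) ∈ p1.roots.toFinset := by
      rw [Multiset.mem_toFinset, mem_roots hp1]
      simp [hp1def, IsRoot]
    rw [hR, Finset.card_erase_of_mem h1mem]
    have := Multiset.toFinset_card_le p1.roots
    have h2' := Polynomial.card_roots' p1
    have h3' : p1.natDegree = n + 1 := by rw [hp1def]; exact natDegree_X_pow_sub_C
    omega
  -- the injection
  have hcross : ∀ c c' : F, c ∈ S → t c ≠ (t c')⁻¹ := by
    intro c c' hcS hEq
    have hcc : c = c' := hrec' c c' hEq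
    rw [← hcc] at hEq
    have h1 : t c * t c = 1 := by nth_rewrite 2 [hEq]; exact mul_inv_cancel₀ (hT0 c)
    exact (hroots c hcS).2 (hsq1 c h1)
  have hinj : S.card * 2 ≤ n := by
    have hmaps : ∀ x ∈ S ×ˢ (Finset.univ : Finset Bool),
        (if x.2 then t x.1 else (t x.1)⁻¹) ∈ R := by
      rintro ⟨a, b⟩ hx
      have haS : a ∈ S := (Finset.mem_product.mp hx).1
      obtain ⟨hpow, hne1⟩ := hroots a haS
      have hinvR : (t a)⁻¹ ∈ R :=
        hmemR _ (fun h => hne1 (by rw [← inv_inv (t a), h, inv_one]))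
          (by rw [inv_pow, hpow, inv_one])
      have htR : t a ∈ R := hmemR _ hne1 hpow
      cases b
      · simpa using hinvR
      · simpa using htR
    have hinjOn : Set.InjOn (fun x : F × Bool => if x.2 then t x.1 else (t x.1)⁻¹)
        ↑(S ×ˢ (Finset.univ : Finset Bool)) := by
      rintro ⟨a, b⟩ hx ⟨a', b'⟩ hx' hEq
      have haS : a ∈ S := (Finset.mem_product.mp (Finset.mem_coe.mp hx)).1
      have haS' : a' ∈ S := (Finset.mem_product.mp (Finset.mem_coe.mp hx')).1
      cases b <;> cases b' <;> simp only [Bool.false_eq_true, ite_true, ite_false,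
        if_true, if_false] at hEq
      · have := hrec a a' (inv_injective hEq)
        simp [this]
      · exact absurd hEq.symm (hcross a' a haS')
      · exact absurd hEq (hcross a a' haS)
      · have := hrec a a' hEq
        simp [this]
    have := Finset.card_le_card_of_injOn _ hmaps hinjOn
    rw [Finset.card_product, Finset.card_univ] at this
    simp only [Fintype.card_bool] at this
    omega
  -- find a non-root
  have hlt : S.card < Finset.univ.card (α := F) := by
    rw [Finset.card_univ]
    omega
  have hne : S ≠ Finset.univ := fun h => by rw [h] at hlt; omega
  obtain ⟨a, _, haS⟩ := Finset.exists_of_ssubset (Finset.ssubset_univ_iff.mpr hne)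
  have haev : (chebP F n).eval a ≠ 0 := by
    intro h
    exact haS (by rw [hS]; simp [h])
  -- conclude
  refine ⟨a + 1, ?_⟩
  have hM : (1 : Matrix (Fin n) (Fin n) F) + triToeplitz F n (a+1) 1 = triToeplitz F n a 1 := by
    ext i j
    by_cases h : (i:ℕ) = (j:ℕ)
    · have hij : i = j := Fin.ext h
      subst hij
      simp only [Matrix.add_apply, Matrix.one_apply_eq, triToeplitz, Matrix.of_apply,
        eq_self_iff_true, if_true]
      linear_combination h2F
    · have hij : i ≠ j := fun hc => h (by rw [hc])
      simp only [Matrix.add_apply, Matrix.one_apply_ne hij, triToeplitz, Matrix.of_apply,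
        if_neg h, zero_add]
  have hMM : ∀ M : Matrix (Fin n) (Fin n) F, M + M = 0 := by
    intro M
    ext i j
    simp only [Matrix.add_apply, Matrix.zero_apply]
    exact CharTwo.add_self_eq_zero _
  have hsq : (1 : Matrix (Fin n) (Fin n) F) + triToeplitz F n (a+1) 1 ^ 2
      = (triToeplitz F n a 1) ^ 2 := by
    rw [← hM]
    set M := triToeplitz F n (a+1) 1
    have hexp : (1 + M)^2 = 1 + (M + M) + M^2 := by noncomm_ring
    rw [hexp, hMM M, add_zero]
  rw [hsq]
  exact (tri_isUnit hn a haev).pow 2
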